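/- Let T = 32T₀ : X → X and for k ≥ 1 set E_k = ε # φ_{k−1}. Then: (1) T(E₁) = E₁ + E₂ + 6t; (2) for k > 1, T(E_k) = E_{k−1} + E_{k+1} + (8k−2)t + (ε # ε); (3) T(ε # ε) = 4(ε # ε) + 4t, and T(t) = 16t, where t denotes the identity function t ↦ t in X. -/

import Mathlib

open scoped BigOperators

noncomputable section

attribute [local instance] Classical.propDecidable

/-- `I`: the set of dyadic rationals in `[0,1]`. -/
def dyadicI : Set ℚ := {t | 0 ≤ t ∧ t ≤ 1 ∧ ∃ i n : ℕ, t = (i : ℚ) / 2 ^ n}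

/-- `X` is the ℚ-vector space of functions `I → ℚ`. -/
abbrev X : Type := dyadicI → ℚ

lemma dyadicI_mem {i n : ℕ} (h : i ≤ 2 ^ n) : (i : ℚ) / 2 ^ n ∈ dyadicI := by
  refine ⟨by positivity, ?_, i, n, rfl⟩
  rw [div_le_one (by positivity)]
  exact_mod_cast h

lemma zero_mem_dyadicI : (0 : ℚ) ∈ dyadicI := by
  simpa using dyadicI_mem (i := 0) (n := 0) (by norm_num)

lemma one_mem_dyadicI : (1 : ℚ) ∈ dyadicI := by
  simpa using dyadicI_mem (i := 1) (n := 0) (by norm_num)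

lemma half_mem_dyadicI : (1 / 2 : ℚ) ∈ dyadicI := by
  have := dyadicI_mem (i := 1) (n := 1) (by norm_num)
  norm_num at this ⊢
  exact this

/-- Evaluation of `α : X` at a rational, extended by `0` off `I`. -/
def evI (α : X) (t : ℚ) : ℚ := if h : t ∈ dyadicI then α ⟨t, h⟩ else 0

/-- The map `T₀ : X → X`, `(T₀ α)(t) = α (t/2)`. -/
def T0 (α : X) : X := fun t => evI α (t.1 / 2)

/-- The map `T₁ : X → X`, `(T₁ α)(t) = α ((1+t)/2)`. -/
def T1 (α : X) : X := fun t => evI α ((1 + t.1) / 2)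

/-- Auxiliary recursion (on the exponent of the denominator) defining `α # β`. -/
def hashAux : ℕ → X → X → ℚ → ℚ
  | 0, α, β, t =>
      if t = 0 then 0 else (evI α 1 - evI α 0) * (evI β 1 - evI β 0)
  | n + 1, α, β, t =>
      if t ≤ 1 / 2 then
        hashAux n (T0 α) (T0 β) (2 * t) + hashAux n (T1 α) (T1 β) (2 * t)
      else
        hashAux n (T0 α) (T0 β) 1 + hashAux n (T1 α) (T1 β) 1 +
          hashAux n (T0 α) (T1 β) (2 * t - 1) + hashAux n (T1 α) (T0 β) (2 * t - 1)

/-- The product `α # β` on `X`. -/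
def hash (α β : X) : X := fun t => hashAux (padicValNat 2 t.1.den) α β t.1

/-- The element `t ↦ t` of `X`. -/
def tId : X := fun t => t.1

/-- The element `ε : t ↦ t − t²` of `X`. -/
def epsX : X := fun t => t.1 - t.1 ^ 2

/-- The constant function `1` in `X`. -/
def oneX : X := fun _ => (1 : ℚ)

/-- Convexity: `2α(i/q) ≥ α((i−1)/q) + α((i+1)/q)` for all powers of two `q = 2^n`, `0 < i < q`. -/
def ConvexX (α : X) : Prop :=
  ∀ n i : ℕ, 0 < i → i < 2 ^ n →
    evI α (((i : ℚ) - 1) / 2 ^ n) + evI α (((i : ℚ) + 1) / 2 ^ n)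
      ≤ 2 * evI α ((i : ℚ) / 2 ^ n)

/-- `α` is Lipschitz with constant `m`. -/
def LipschitzQ (m : ℚ) (α : X) : Prop :=
  ∀ s t : dyadicI, |α s - α t| ≤ m * |s.1 - t.1|

/-- The point `2^{-n}` of `I`. -/
def invPow (n : ℕ) : dyadicI :=
  ⟨1 / 2 ^ n, by simpa using dyadicI_mem (i := 1) (n := n) Nat.one_le_two_pow⟩

/-- `μ` is the Hilbert–Kunz multiplicity of `α`, i.e. `μ = lim 2^n α(2^{-n})`. -/
def IsHKmu (α : X) (μ : ℝ) : Prop :=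
  Filter.Tendsto (fun n : ℕ => ((2 ^ n * α (invPow n) : ℚ) : ℝ)) Filter.atTop (nhds μ)

/-- The series `S_α = Σ α(2^{-n}) (2w)^n = Σ (2^n α(2^{-n})) w^n`. -/
def hkSeries (α : X) : PowerSeries ℚ := PowerSeries.mk fun n => 2 ^ n * α (invPow n)

/-- Auxiliary recursion defining the functions `φ_m`. -/
def phiAux : ℕ → ℕ → ℚ → ℚ
  | 0, _, _ => 0
  | n + 1, m, t =>
      if t ≤ 1 / 2 then
        if m % 2 = 0 then (phiAux n (m + 1) (2 * t) + (8 * (m : ℚ) + 6) * t) / 8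
        else (phiAux n (m - 1) (2 * t) + ((2 * t) - (2 * t) ^ 2) + (8 * (m : ℚ) + 6) * t) / 8
      else
        if m = 0 then (phiAux n 0 (2 * t - 1) + 6 * (1 - t)) / 8
        else if m % 2 = 0 then
          (phiAux n (m - 1) (2 * t - 1) + ((2 * t - 1) - (2 * t - 1) ^ 2)
            + (8 * (m : ℚ) + 6) * (1 - t)) / 8
        else (phiAux n (m + 1) (2 * t - 1) + (8 * (m : ℚ) + 6) * (1 - t)) / 8

/-- The functions `φ_m ∈ X` of Definition 2.2. -/
def phiM (m : ℕ) : X := fun t => phiAux (padicValNat 2 t.1.den) m t.1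

/-- `ℕ` with the Nim-sum (bitwise XOR) as its (commutative) monoid operation. -/
def NimNat : Type := ℕ

instance : CommMonoid NimNat where
  mul a b := Nat.xor a b
  one := (0 : ℕ)
  mul_assoc := Nat.xor_assoc
  mul_comm := Nat.xor_comm
  one_mul := Nat.zero_xor
  mul_one := Nat.xor_zero

/-- The ring `Γ`: free `ℤ`-module on `λ₀, λ₁, …` with `λᵢλⱼ = λ_{i XOR j}`. -/
abbrev GammaZ : Type := MonoidAlgebra ℤ NimNat

/-- The ring `Γ_Q = Γ ⊗ ℚ`. -/
abbrev GammaQ : Type := MonoidAlgebra ℚ NimNat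

/-- The basis element `λᵢ` of `Γ`. -/
def lamZ (i : ℕ) : GammaZ := MonoidAlgebra.single (show NimNat from i) 1

/-- The basis element `λᵢ` of `Γ_Q`. -/
def lamQ (i : ℕ) : GammaQ := MonoidAlgebra.single (show NimNat from i) 1

/-- `δ_r = λ₀ − λ₁ + ⋯ + (−1)^{r−1} λ_{r−1}` in `Γ`. -/
def deltaZ (r : ℕ) : GammaZ := ∑ i ∈ Finset.range r, ((-1 : ℤ) ^ i) • lamZ i

/-- `δ_r` in `Γ_Q`. -/
def deltaQ (r : ℕ) : GammaQ := ∑ i ∈ Finset.range r, ((-1 : ℚ) ^ i) • lamQ i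

/-- `L_n(α) = Σ_{i=0}^{2^n−1} (α((i+1)/2^n) − α(i/2^n)) (−1)^i λᵢ ∈ Γ_Q`. -/
def Ln (n : ℕ) (α : X) : GammaQ :=
  ∑ i ∈ Finset.range (2 ^ n),
    ((-1 : ℚ) ^ i * (evI α (((i : ℚ) + 1) / 2 ^ n) - evI α ((i : ℚ) / 2 ^ n))) • lamQ i

/-- The Hilbert–Kunz function `φ_f ∈ X` of a power series `f`:
`φ_f(i/q) = q^{-r} · dim_F F[[u₁,…,u_r]]/(u₁^q,…,u_r^q,f^i)`. -/
def phiF {F : Type} [Field F] {σ : Type} (f : MvPowerSeries σ F) : X := fun t =>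
  ((Module.finrank F
      (MvPowerSeries σ F ⧸ Ideal.span
        (Set.range (fun j : σ => (MvPowerSeries.X j : MvPowerSeries σ F) ^ t.1.den)
          ∪ {f ^ t.1.num.toNat}))) : ℚ)
    / (t.1.den : ℚ) ^ (Nat.card σ)

/-- The natural inclusion `F[[u_j : j ∈ σ]] → F[[u_j : j ∈ τ]]` along an injection `e : σ → τ`. -/
def embPS {F : Type} [Field F] {σ τ : Type} (e : σ → τ) (f : MvPowerSeries σ F) :
    MvPowerSeries τ F := fun d =>
  if h : ∃ d' : σ →₀ ℕ, Finsupp.mapDomain e d' = d then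
    MvPowerSeries.coeff h.choose f
  else 0


namespace L25

def Dy (n : ℕ) (t : ℚ) : Prop := ∃ i : ℤ, t = (i : ℚ) / 2 ^ n

lemma dy_zero (n : ℕ) : Dy n 0 := ⟨0, by simp⟩
lemma dy_one (n : ℕ) : Dy n 1 := ⟨2 ^ n, by push_cast; rw [div_self]; positivity⟩
lemma Dy.succ {n : ℕ} {t : ℚ} (h : Dy n t) : Dy (n + 1) t := by
  obtain ⟨i, rfl⟩ := h; exact ⟨2 * i, by push_cast; ring⟩
lemma Dy.two_mul {n : ℕ} {t : ℚ} (h : Dy (n + 1) t) : Dy n (2 * t) := by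
  obtain ⟨i, rfl⟩ := h; exact ⟨i, by rw [pow_succ]; ring⟩
lemma Dy.two_mul_sub {n : ℕ} {t : ℚ} (h : Dy (n + 1) t) : Dy n (2 * t - 1) := by
  obtain ⟨i, rfl⟩ := h
  refine ⟨i - 2 ^ n, ?_⟩
  have h2 : (2:ℚ) ^ n ≠ 0 := by positivity
  push_cast
  field_simp
  ring
lemma Dy.half {n : ℕ} {t : ℚ} (h : Dy n t) : Dy (n + 1) (t / 2) := by
  obtain ⟨i, rfl⟩ := h; exact ⟨i, by rw [pow_succ]; ring⟩
lemma Dy.shift_half {n : ℕ} {t : ℚ} (h : Dy n t) : Dy (n + 1) ((1 + t) / 2) := by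
  obtain ⟨i, rfl⟩ := h
  refine ⟨2 ^ n + i, ?_⟩
  have h2 : (2:ℚ) ^ n ≠ 0 := by positivity
  push_cast
  rw [show (1 : ℚ) + (i:ℚ)/2^n = ((2:ℚ)^n + (i:ℚ))/2^n from by field_simp, div_div, ← pow_succ]
lemma Dy.zero_cases {t : ℚ} (h : Dy 0 t) (h0 : 0 ≤ t) (h1 : t ≤ 1) : t = 0 ∨ t = 1 := by
  obtain ⟨i, rfl⟩ := h
  simp only [pow_zero, div_one] at h0 h1 ⊢
  have hi0 : (0 : ℤ) ≤ i := by exact_mod_cast h0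
  have hi1 : i ≤ 1 := by exact_mod_cast h1
  interval_cases i <;> simp

lemma mem_of_dy {n : ℕ} {t : ℚ} (h : Dy n t) (h0 : 0 ≤ t) (h1 : t ≤ 1) : t ∈ dyadicI := by
  obtain ⟨i, rfl⟩ := h
  have hi : (0 : ℤ) ≤ i := by
    by_contra hx
    push_neg at hx
    have : (i : ℚ) < 0 := by exact_mod_cast hx
    have := div_neg_of_neg_of_pos this (by positivity : (0:ℚ) < 2 ^ n)
    linarith
  refine ⟨h0, h1, i.toNat, n, ?_⟩
  have hc : ((i.toNat : ℕ) : ℚ) = (i : ℚ) := by exact_mod_cast Int.toNat_of_nonneg hi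
  rw [hc]

lemma dy_of_mem {t : ℚ} (h : t ∈ dyadicI) : ∃ n, Dy n t := by
  obtain ⟨h0, h1, i, n, ht⟩ := h
  exact ⟨n, ⟨(i : ℤ), by push_cast; exact ht⟩⟩

lemma dy_val {n : ℕ} {t : ℚ} (h : Dy n t) :
    Dy (padicValNat 2 t.den) t ∧ padicValNat 2 t.den ≤ n := by
  obtain ⟨i, rfl⟩ := h
  have hdvd : ((i : ℚ) / 2 ^ n).den ∣ 2 ^ n := by
    have := Rat.den_dvd i (2 ^ n)
    rw [Rat.divInt_eq_div] at this
    have h2 : ((i : ℚ) / (2 ^ n : ℤ)) = (i : ℚ) / 2 ^ n := by push_cast; ring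
    rw [h2] at this
    exact_mod_cast this
  obtain ⟨k, hk, hden⟩ := (Nat.dvd_prime_pow Nat.prime_two).mp hdvd
  have hval : padicValNat 2 ((i : ℚ) / 2 ^ n).den = k := by
    rw [hden]; exact padicValNat.prime_pow k
  constructor
  · rw [hval]
    refine ⟨((i : ℚ) / 2 ^ n).num, ?_⟩
    conv_lhs => rw [← Rat.num_div_den ((i : ℚ) / 2 ^ n)]
    rw [hden]
    push_cast
    ring_nf
  · rw [hval]; exact hk


lemma evI_of_mem {α : X} {t : ℚ} (h : t ∈ dyadicI) : evI α t = α ⟨t, h⟩ := dif_pos h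

lemma evI_add (α β : X) (t : ℚ) : evI (α + β) t = evI α t + evI β t := by
  unfold evI; split <;> simp [Pi.add_apply]

lemma evI_smul (a : ℚ) (α : X) (t : ℚ) : evI (a • α) t = a * evI α t := by
  unfold evI; split <;> simp

lemma half_mem (s : dyadicI) : s.1 / 2 ∈ dyadicI := by
  obtain ⟨n, hn⟩ := dy_of_mem s.2
  exact mem_of_dy hn.half (by have := s.2.1; linarith) (by have := s.2.2.1; linarith)

lemma shift_mem (s : dyadicI) : (1 + s.1) / 2 ∈ dyadicI := by
  obtain ⟨n, hn⟩ := dy_of_mem s.2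
  exact mem_of_dy hn.shift_half (by have := s.2.1; linarith) (by have := s.2.2.1; linarith)

lemma T0_add (α β : X) : T0 (α + β) = T0 α + T0 β := funext fun s => evI_add α β _
lemma T1_add (α β : X) : T1 (α + β) = T1 α + T1 β := funext fun s => evI_add α β _
lemma T0_smul (a : ℚ) (α : X) : T0 (a • α) = a • T0 α := funext fun s => evI_smul a α _
lemma T1_smul (a : ℚ) (α : X) : T1 (a • α) = a • T1 α := funext fun s => evI_smul a α _
lemma T0_one : T0 oneX = oneX := by
  funext s; show evI oneX (s.1 / 2) = 1
  rw [evI_of_mem (half_mem s)]; rfl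
lemma T1_one : T1 oneX = oneX := by
  funext s; show evI oneX ((1 + s.1) / 2) = 1
  rw [evI_of_mem (shift_mem s)]; rfl
lemma T0_tId : T0 tId = (2:ℚ)⁻¹ • tId := by
  funext s; show evI tId (s.1 / 2) = (2:ℚ)⁻¹ • tId s
  rw [evI_of_mem (half_mem s)]
  show s.1 / 2 = (2:ℚ)⁻¹ * s.1
  ring
lemma T1_tId : T1 tId = (2:ℚ)⁻¹ • (oneX + tId) := by
  funext s; show evI tId ((1 + s.1) / 2) = (2:ℚ)⁻¹ • (oneX + tId) s
  rw [evI_of_mem (shift_mem s)]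
  show (1 + s.1) / 2 = (2:ℚ)⁻¹ * (1 + s.1)
  ring
lemma T0_eps : T0 epsX = (4:ℚ)⁻¹ • (epsX + tId) := by
  funext s; show evI epsX (s.1 / 2) = (4:ℚ)⁻¹ • (epsX + tId) s
  rw [evI_of_mem (half_mem s)]
  show s.1/2 - (s.1/2)^2 = (4:ℚ)⁻¹ * ((s.1 - s.1^2) + s.1)
  ring
lemma T1_eps : T1 epsX = (4:ℚ)⁻¹ • (epsX + oneX - tId) := by
  funext s; show evI epsX ((1 + s.1) / 2) = (4:ℚ)⁻¹ • (epsX + oneX - tId) s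
  rw [evI_of_mem (shift_mem s)]
  show (1+s.1)/2 - ((1+s.1)/2)^2 = (4:ℚ)⁻¹ * ((s.1 - s.1^2) + 1 - s.1)
  ring

-- endpoint values of evI for the basic functions
lemma evI_tId_one : evI tId 1 = 1 := by rw [evI_of_mem one_mem_dyadicI]; rfl
lemma evI_tId_zero : evI tId 0 = 0 := by rw [evI_of_mem zero_mem_dyadicI]; rfl
lemma evI_eps_one : evI epsX 1 = 0 := by rw [evI_of_mem one_mem_dyadicI]; show (1:ℚ) - 1^2 = 0; norm_num
lemma evI_eps_zero : evI epsX 0 = 0 := by rw [evI_of_mem zero_mem_dyadicI]; show (0:ℚ) - 0^2 = 0; norm_num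
lemma evI_one_pt (t : ℚ) (h : t ∈ dyadicI) : evI oneX t = 1 := by rw [evI_of_mem h]; rfl

lemma phiAux_zero_pt : ∀ n m, phiAux n m 0 = 0 := by
  intro n
  induction n with
  | zero => intro m; rfl
  | succ n ih => intro m; simp only [phiAux]; norm_num [ih]
lemma phiAux_one_pt : ∀ n m, phiAux n m 1 = 0 := by
  intro n
  induction n with
  | zero => intro m; rfl
  | succ n ih =>
    intro m
    simp only [phiAux]
    norm_num [ih]

lemma evI_phi_one (m : ℕ) : evI (phiM m) 1 = 0 := by
  rw [evI_of_mem one_mem_dyadicI]; exact phiAux_one_pt _ m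
lemma evI_phi_zero (m : ℕ) : evI (phiM m) 0 = 0 := by
  rw [evI_of_mem zero_mem_dyadicI]; exact phiAux_zero_pt _ m

-- evI of T at endpoints
lemma evI_T0_one (α : X) : evI (T0 α) 1 = evI α (1/2) := by
  rw [evI_of_mem one_mem_dyadicI]; show evI α (1/2) = _; norm_num
lemma evI_T0_zero (α : X) : evI (T0 α) 0 = evI α 0 := by
  rw [evI_of_mem zero_mem_dyadicI]; show evI α (0/2) = _; norm_num
lemma evI_T1_one (α : X) : evI (T1 α) 1 = evI α 1 := by
  rw [evI_of_mem one_mem_dyadicI]; show evI α ((1+1)/2) = _; norm_num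
lemma evI_T1_zero (α : X) : evI (T1 α) 0 = evI α (1/2) := by
  rw [evI_of_mem zero_mem_dyadicI]; show evI α ((1+0)/2) = _; norm_num

lemma phiAux_step (n m : ℕ) (t : ℚ) : phiAux (n + 1) m t =
      (if t ≤ 1 / 2 then
        if m % 2 = 0 then (phiAux n (m + 1) (2 * t) + (8 * (m : ℚ) + 6) * t) / 8
        else (phiAux n (m - 1) (2 * t) + ((2 * t) - (2 * t) ^ 2) + (8 * (m : ℚ) + 6) * t) / 8
      else
        if m = 0 then (phiAux n 0 (2 * t - 1) + 6 * (1 - t)) / 8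
        else if m % 2 = 0 then
          (phiAux n (m - 1) (2 * t - 1) + ((2 * t - 1) - (2 * t - 1) ^ 2)
            + (8 * (m : ℚ) + 6) * (1 - t)) / 8
        else (phiAux n (m + 1) (2 * t - 1) + (8 * (m : ℚ) + 6) * (1 - t)) / 8) := rfl

lemma hashAux_step (n : ℕ) (α β : X) (t : ℚ) : hashAux (n + 1) α β t =
      (if t ≤ 1 / 2 then
        hashAux n (T0 α) (T0 β) (2 * t) + hashAux n (T1 α) (T1 β) (2 * t)
      else
        hashAux n (T0 α) (T0 β) 1 + hashAux n (T1 α) (T1 β) 1 +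
          hashAux n (T0 α) (T1 β) (2 * t - 1) + hashAux n (T1 α) (T0 β) (2 * t - 1)) := rfl

lemma phiAux_succ : ∀ n m (t : ℚ), Dy n t → 0 ≤ t → t ≤ 1 →
    phiAux (n + 1) m t = phiAux n m t := by
  intro n
  induction n with
  | zero =>
    intro m t hd h0 h1
    rcases hd.zero_cases h0 h1 with rfl | rfl
    · simp only [phiAux]; norm_num [phiAux]
    · simp only [phiAux]; norm_num [phiAux]
  | succ n ih =>
    intro m t hd h0 h1
    by_cases ht : t ≤ 1/2
    · have hb0 : (0:ℚ) ≤ 2 * t := by linarith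
      have hb1 : 2 * t ≤ 1 := by linarith
      rw [phiAux_step (n+1), if_pos ht]
      conv_rhs => rw [phiAux_step n, if_pos ht]
      split_ifs <;> rw [ih _ _ hd.two_mul hb0 hb1]
    · have hb0 : (0:ℚ) ≤ 2 * t - 1 := by linarith
      have hb1 : 2 * t - 1 ≤ 1 := by linarith
      rw [phiAux_step (n+1), if_neg ht]
      conv_rhs => rw [phiAux_step n, if_neg ht]
      split_ifs <;> rw [ih _ _ hd.two_mul_sub hb0 hb1]

lemma phiAux_of_le {k n : ℕ} (hkn : k ≤ n) {t : ℚ} (hd : Dy k t) (h0 : 0 ≤ t) (h1 : t ≤ 1)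
    (m : ℕ) : phiAux n m t = phiAux k m t := by
  induction n, hkn using Nat.le_induction with
  | base => rfl
  | succ n hkn ih =>
    have hdn : Dy n t := by
      clear ih
      induction n, hkn using Nat.le_induction with
      | base => exact hd
      | succ n _ ih2 => exact ih2.succ
    rw [phiAux_succ n m t hdn h0 h1, ih]

lemma dy_mono {k n : ℕ} (hkn : k ≤ n) {t : ℚ} (hd : Dy k t) : Dy n t := by
  induction n, hkn using Nat.le_induction with
  | base => exact hd
  | succ n _ ih => exact ih.succ

lemma hashAux_succ : ∀ n (α β : X) (t : ℚ), Dy n t → 0 ≤ t → t ≤ 1 →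
    hashAux (n + 1) α β t = hashAux n α β t := by
  intro n
  induction n with
  | zero =>
    intro α β t hd h0 h1
    rcases hd.zero_cases h0 h1 with rfl | rfl
    · norm_num [hashAux]
    · norm_num [hashAux, evI_T0_one, evI_T0_zero, evI_T1_one, evI_T1_zero]
      ring
  | succ n ih =>
    intro α β t hd h0 h1
    by_cases ht : t ≤ 1/2
    · have hb0 : (0:ℚ) ≤ 2 * t := by linarith
      have hb1 : 2 * t ≤ 1 := by linarith
      rw [hashAux_step (n+1), if_pos ht]
      conv_rhs => rw [hashAux_step n, if_pos ht]
      rw [ih _ _ _ hd.two_mul hb0 hb1, ih _ _ _ hd.two_mul hb0 hb1]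
    · have hb0 : (0:ℚ) ≤ 2 * t - 1 := by linarith
      have hb1 : 2 * t - 1 ≤ 1 := by linarith
      rw [hashAux_step (n+1), if_neg ht]
      conv_rhs => rw [hashAux_step n, if_neg ht]
      rw [ih _ _ _ hd.two_mul_sub hb0 hb1, ih _ _ _ hd.two_mul_sub hb0 hb1,
        ih _ _ _ (dy_one n) (by norm_num) (by norm_num),
        ih _ _ _ (dy_one n) (by norm_num) (by norm_num)]

lemma hashAux_of_le {k n : ℕ} (hkn : k ≤ n) {t : ℚ} (hd : Dy k t) (h0 : 0 ≤ t) (h1 : t ≤ 1)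
    (α β : X) : hashAux n α β t = hashAux k α β t := by
  induction n, hkn using Nat.le_induction with
  | base => rfl
  | succ n hkn ih => rw [hashAux_succ n α β t (dy_mono hkn hd) h0 h1, ih]

lemma evI_phi {n m : ℕ} {t : ℚ} (hd : Dy n t) (h0 : 0 ≤ t) (h1 : t ≤ 1) :
    evI (phiM m) t = phiAux n m t := by
  rw [evI_of_mem (mem_of_dy hd h0 h1)]
  show phiAux (padicValNat 2 t.den) m t = phiAux n m t
  obtain ⟨hdv, hle⟩ := dy_val hd
  rw [phiAux_of_le hle hdv h0 h1, phiAux_of_le (le_refl _) hdv h0 h1]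

lemma evI_hash {n : ℕ} {t : ℚ} (hd : Dy n t) (h0 : 0 ≤ t) (h1 : t ≤ 1) (α β : X) :
    evI (hash α β) t = hashAux n α β t := by
  rw [evI_of_mem (mem_of_dy hd h0 h1)]
  show hashAux (padicValNat 2 t.den) α β t = hashAux n α β t
  obtain ⟨hdv, hle⟩ := dy_val hd
  rw [hashAux_of_le hle hdv h0 h1, hashAux_of_le (le_refl _) hdv h0 h1]

lemma hash_apply {n : ℕ} (α β : X) (s : dyadicI) (hd : Dy n s.1) :
    hash α β s = hashAux n α β s.1 := by
  have := (evI_hash hd s.2.1 s.2.2.1 α β).symm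
  rw [evI_of_mem s.2] at this
  exact this.symm

lemma hashAux_add_left : ∀ n (α α' β : X) (t : ℚ),
    hashAux n (α + α') β t = hashAux n α β t + hashAux n α' β t := by
  intro n
  induction n with
  | zero =>
    intro α α' β t
    simp only [hashAux]
    split_ifs
    · ring
    · rw [evI_add, evI_add]; ring
  | succ n ih =>
    intro α α' β t
    simp only [hashAux_step, T0_add, T1_add]
    split_ifs
    · rw [ih, ih]; ring
    · rw [ih, ih, ih, ih]; ring

lemma hashAux_smul_left : ∀ n (a : ℚ) (α β : X) (t : ℚ),
    hashAux n (a • α) β t = a * hashAux n α β t := by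
  intro n
  induction n with
  | zero =>
    intro a α β t
    simp only [hashAux]
    split_ifs
    · ring
    · rw [evI_smul, evI_smul]; ring
  | succ n ih =>
    intro a α β t
    simp only [hashAux_step, T0_smul, T1_smul]
    split_ifs
    · rw [ih, ih]; ring
    · rw [ih, ih, ih, ih]; ring

lemma hashAux_comm : ∀ n (α β : X) (t : ℚ), hashAux n α β t = hashAux n β α t := by
  intro n
  induction n with
  | zero =>
    intro α β t
    simp only [hashAux]
    split_ifs
    · rfl
    · ring
  | succ n ih =>
    intro α β t
    simp only [hashAux_step]
    split_ifs
    · rw [ih (T0 α), ih (T1 α)]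
    · rw [ih (T0 α) (T0 β), ih (T1 α) (T1 β), ih (T0 α) (T1 β), ih (T1 α) (T0 β)]; ring

lemma hashAux_add_right (n : ℕ) (α β β' : X) (t : ℚ) :
    hashAux n α (β + β') t = hashAux n α β t + hashAux n α β' t := by
  rw [hashAux_comm, hashAux_add_left, hashAux_comm n β, hashAux_comm n β']

lemma hashAux_smul_right (n : ℕ) (a : ℚ) (α β : X) (t : ℚ) :
    hashAux n α (a • β) t = a * hashAux n α β t := by
  rw [hashAux_comm, hashAux_smul_left, hashAux_comm]

lemma neg_eq_smul (α : X) : -α = (-1 : ℚ) • α := by funext s; simp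

lemma hashAux_sub_left (n : ℕ) (α α' β : X) (t : ℚ) :
    hashAux n (α - α') β t = hashAux n α β t - hashAux n α' β t := by
  rw [sub_eq_add_neg, hashAux_add_left, neg_eq_smul, hashAux_smul_left]; ring

lemma hashAux_sub_right (n : ℕ) (α β β' : X) (t : ℚ) :
    hashAux n α (β - β') t = hashAux n α β t - hashAux n α β' t := by
  rw [hashAux_comm, hashAux_sub_left, hashAux_comm n β, hashAux_comm n β']

lemma hashAux_one_left : ∀ n (β : X) (t : ℚ), hashAux n oneX β t = 0 := by
  intro n
  induction n with
  | zero =>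
    intro β t
    simp only [hashAux]
    split_ifs
    · rfl
    · rw [evI_one_pt 1 one_mem_dyadicI, evI_one_pt 0 zero_mem_dyadicI]; ring
  | succ n ih =>
    intro β t
    simp only [hashAux_step, T0_one, T1_one]
    split_ifs <;> simp [ih]

lemma hashAux_one_right (n : ℕ) (α : X) (t : ℚ) : hashAux n α oneX t = 0 := by
  rw [hashAux_comm, hashAux_one_left]

lemma hashAux_tt : ∀ n (t : ℚ), Dy n t → 0 ≤ t → t ≤ 1 → hashAux n tId tId t = t := by
  intro n
  induction n with
  | zero =>
    intro t hd h0 h1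
    rcases hd.zero_cases h0 h1 with rfl | rfl
    · simp [hashAux]
    · simp [hashAux, evI_tId_one, evI_tId_zero]
  | succ n ih =>
    intro t hd h0 h1
    rw [hashAux_step, T0_tId, T1_tId]
    by_cases ht : t ≤ 1/2
    · rw [if_pos ht]
      have hb0 : (0:ℚ) ≤ 2 * t := by linarith
      have hb1 : 2 * t ≤ 1 := by linarith
      simp only [hashAux_smul_left, hashAux_smul_right, hashAux_add_left, hashAux_add_right,
        hashAux_one_left, hashAux_one_right]
      rw [ih _ hd.two_mul hb0 hb1]
      ring
    · rw [if_neg ht]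
      have hb0 : (0:ℚ) ≤ 2 * t - 1 := by linarith
      have hb1 : 2 * t - 1 ≤ 1 := by linarith
      simp only [hashAux_smul_left, hashAux_smul_right, hashAux_add_left, hashAux_add_right,
        hashAux_one_left, hashAux_one_right]
      rw [ih _ hd.two_mul_sub hb0 hb1, ih _ (dy_one n) (by norm_num) (by norm_num)]
      ring

lemma hashAux_eps_t : ∀ n (t : ℚ), Dy n t → 0 ≤ t → t ≤ 1 → hashAux n epsX tId t = 0 := by
  intro n
  induction n with
  | zero =>
    intro t hd h0 h1
    rcases hd.zero_cases h0 h1 with rfl | rfl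
    · simp [hashAux]
    · simp [hashAux, evI_eps_one, evI_eps_zero]
  | succ n ih =>
    intro t hd h0 h1
    rw [hashAux_step, T0_eps, T1_eps, T0_tId, T1_tId]
    by_cases ht : t ≤ 1/2
    · rw [if_pos ht]
      have hb0 : (0:ℚ) ≤ 2 * t := by linarith
      have hb1 : 2 * t ≤ 1 := by linarith
      simp only [hashAux_smul_left, hashAux_smul_right, hashAux_add_left, hashAux_add_right,
        hashAux_sub_left, hashAux_sub_right, hashAux_one_left, hashAux_one_right]
      rw [ih _ hd.two_mul hb0 hb1, hashAux_tt _ _ hd.two_mul hb0 hb1]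
      ring
    · rw [if_neg ht]
      have hb0 : (0:ℚ) ≤ 2 * t - 1 := by linarith
      have hb1 : 2 * t - 1 ≤ 1 := by linarith
      simp only [hashAux_smul_left, hashAux_smul_right, hashAux_add_left, hashAux_add_right,
        hashAux_sub_left, hashAux_sub_right, hashAux_one_left, hashAux_one_right]
      rw [ih _ hd.two_mul_sub hb0 hb1, hashAux_tt _ _ hd.two_mul_sub hb0 hb1,
        ih _ (dy_one n) (by norm_num) (by norm_num),
        hashAux_tt _ _ (dy_one n) (by norm_num) (by norm_num)]
      ring

lemma hashAux_t_eps (n : ℕ) {t : ℚ} (hd : Dy n t) (h0 : 0 ≤ t) (h1 : t ≤ 1) :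
    hashAux n tId epsX t = 0 := by
  rw [hashAux_comm]; exact hashAux_eps_t n t hd h0 h1

lemma oneX_apply (s : dyadicI) : oneX s = 1 := rfl
lemma tId_apply (s : dyadicI) : tId s = s.1 := rfl
lemma epsX_apply (s : dyadicI) : epsX s = s.1 - s.1^2 := rfl
lemma phiAux_zeroth (m : ℕ) (t : ℚ) : phiAux 0 m t = 0 := rfl

lemma phiM_apply_of_dy {n m : ℕ} (s : dyadicI) (hd : Dy n s.1) :
    phiM m s = phiAux n m s.1 := by
  have := evI_phi (m := m) hd s.2.1 s.2.2.1
  rw [evI_of_mem s.2] at this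
  exact this

lemma T0_phi_even {m : ℕ} (hm : m % 2 = 0) :
    T0 (phiM m) = (8:ℚ)⁻¹ • (phiM (m+1) + (4*(m:ℚ)+3) • tId) := by
  funext s
  obtain ⟨n, hn⟩ := dy_of_mem s.2
  have h0 := s.2.1; have h1 := s.2.2.1
  show evI (phiM m) (s.1/2) = _
  rw [evI_phi hn.half (by linarith) (by linarith)]
  rw [phiAux_step, if_pos (by linarith : s.1/2 ≤ 1/2), if_pos hm]
  rw [show 2*(s.1/2) = s.1 by ring]
  rw [← phiM_apply_of_dy s hn]
  show _ = (8:ℚ)⁻¹ * (phiM (m+1) s + (4*(m:ℚ)+3) * s.1)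
  ring

lemma T0_phi_odd {m : ℕ} (hm : m % 2 = 1) :
    T0 (phiM m) = (8:ℚ)⁻¹ • (phiM (m-1) + epsX + (4*(m:ℚ)+3) • tId) := by
  funext s
  obtain ⟨n, hn⟩ := dy_of_mem s.2
  have h0 := s.2.1; have h1 := s.2.2.1
  show evI (phiM m) (s.1/2) = _
  rw [evI_phi hn.half (by linarith) (by linarith)]
  rw [phiAux_step, if_pos (by linarith : s.1/2 ≤ 1/2), if_neg (by omega : ¬ m % 2 = 0)]
  rw [show 2*(s.1/2) = s.1 by ring]
  rw [← phiM_apply_of_dy s hn]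
  show _ = (8:ℚ)⁻¹ * ((phiM (m-1) s + (s.1 - s.1^2)) + (4*(m:ℚ)+3) * s.1)
  ring

lemma phiM_zero_val {j : ℕ} (s : dyadicI) (hs : s.1 = 0) : phiM j s = 0 := by
  show phiAux _ j s.1 = 0
  rw [hs]
  exact phiAux_zero_pt _ j

lemma T1_phi_zero : T1 (phiM 0) = (8:ℚ)⁻¹ • (phiM 0 + (3:ℚ) • (oneX - tId)) := by
  funext s
  obtain ⟨n, hn⟩ := dy_of_mem s.2
  have h0 := s.2.1; have h1 := s.2.2.1
  show evI (phiM 0) ((1 + s.1)/2) = _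
  by_cases hs : s.1 = 0
  · rw [show (1 + s.1)/2 = 1/2 from by rw [hs]; norm_num]
    rw [evI_phi (n := 1) ⟨1, by norm_num⟩ (by norm_num) (by norm_num)]
    rw [phiAux_step, if_pos (by norm_num : (1:ℚ)/2 ≤ 1/2)]
    simp only [Pi.smul_apply, Pi.add_apply, Pi.sub_apply, smul_eq_mul, oneX_apply, tId_apply,
      epsX_apply, phiM_zero_val s hs, hs]
    norm_num [phiAux_zeroth, phiAux_one_pt]
  · have hs' : 0 < s.1 := lt_of_le_of_ne h0 (Ne.symm hs)
    rw [evI_phi hn.shift_half (by linarith) (by linarith)]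
    rw [phiAux_step, if_neg (by push_neg; linarith : ¬ (1 + s.1)/2 ≤ 1/2), if_pos rfl]
    rw [show 2*((1 + s.1)/2) - 1 = s.1 by ring]
    rw [← phiM_apply_of_dy s hn]
    show _ = (8:ℚ)⁻¹ * (phiM 0 s + 3 * (1 - s.1))
    ring

lemma T1_phi_even {m : ℕ} (hm : m % 2 = 0) (hm0 : m ≠ 0) :
    T1 (phiM m) = (8:ℚ)⁻¹ • (phiM (m-1) + epsX + (4*(m:ℚ)+3) • (oneX - tId)) := by
  funext s
  obtain ⟨n, hn⟩ := dy_of_mem s.2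
  have h0 := s.2.1; have h1 := s.2.2.1
  show evI (phiM m) ((1 + s.1)/2) = _
  by_cases hs : s.1 = 0
  · rw [show (1 + s.1)/2 = 1/2 from by rw [hs]; norm_num]
    rw [evI_phi (n := 1) ⟨1, by norm_num⟩ (by norm_num) (by norm_num)]
    rw [phiAux_step, if_pos (by norm_num : (1:ℚ)/2 ≤ 1/2), if_pos hm]
    simp only [Pi.smul_apply, Pi.add_apply, Pi.sub_apply, smul_eq_mul, oneX_apply, tId_apply,
      epsX_apply, phiM_zero_val s hs, hs]
    norm_num [phiAux_zeroth, phiAux_one_pt]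
    ring
  · have hs' : 0 < s.1 := lt_of_le_of_ne h0 (Ne.symm hs)
    rw [evI_phi hn.shift_half (by linarith) (by linarith)]
    rw [phiAux_step, if_neg (by push_neg; linarith : ¬ (1 + s.1)/2 ≤ 1/2), if_neg hm0, if_pos hm]
    rw [show 2*((1 + s.1)/2) - 1 = s.1 by ring]
    rw [← phiM_apply_of_dy s hn]
    show _ = (8:ℚ)⁻¹ * ((phiM (m-1) s + (s.1 - s.1^2)) + (4*(m:ℚ)+3) * (1 - s.1))
    ring

lemma T1_phi_odd {m : ℕ} (hm : m % 2 = 1) :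
    T1 (phiM m) = (8:ℚ)⁻¹ • (phiM (m+1) + (4*(m:ℚ)+3) • (oneX - tId)) := by
  funext s
  obtain ⟨n, hn⟩ := dy_of_mem s.2
  have h0 := s.2.1; have h1 := s.2.2.1
  show evI (phiM m) ((1 + s.1)/2) = _
  by_cases hs : s.1 = 0
  · rw [show (1 + s.1)/2 = 1/2 from by rw [hs]; norm_num]
    rw [evI_phi (n := 1) ⟨1, by norm_num⟩ (by norm_num) (by norm_num)]
    rw [phiAux_step, if_pos (by norm_num : (1:ℚ)/2 ≤ 1/2), if_neg (by omega : ¬ m % 2 = 0)]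
    simp only [Pi.smul_apply, Pi.add_apply, Pi.sub_apply, smul_eq_mul, oneX_apply, tId_apply,
      epsX_apply, phiM_zero_val s hs, hs]
    norm_num [phiAux_zeroth, phiAux_one_pt]
    ring
  · have hs' : 0 < s.1 := lt_of_le_of_ne h0 (Ne.symm hs)
    rw [evI_phi hn.shift_half (by linarith) (by linarith)]
    rw [phiAux_step, if_neg (by push_neg; linarith : ¬ (1 + s.1)/2 ≤ 1/2),
      if_neg (by omega : ¬ m = 0), if_neg (by omega : ¬ m % 2 = 0)]
    rw [show 2*((1 + s.1)/2) - 1 = s.1 by ring]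
    rw [← phiM_apply_of_dy s hn]
    show _ = (8:ℚ)⁻¹ * (phiM (m+1) s + (4*(m:ℚ)+3) * (1 - s.1))
    ring

lemma hashAux_t_phi : ∀ n (m : ℕ) (t : ℚ), Dy n t → 0 ≤ t → t ≤ 1 →
    hashAux n tId (phiM m) t = 0 := by
  intro n
  induction n with
  | zero =>
    intro m t hd h0 h1
    rcases hd.zero_cases h0 h1 with rfl | rfl
    · simp [hashAux]
    · simp [hashAux, evI_phi_one, evI_phi_zero]
  | succ n ih =>
    intro m t hd h0 h1
    rw [hashAux_step, T0_tId, T1_tId]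
    rcases Nat.lt_or_ge 0 m with hm0 | hm0; swap
    · -- m = 0
      interval_cases m
      rw [T0_phi_even (by norm_num), T1_phi_zero]
      by_cases ht : t ≤ 1/2
      · rw [if_pos ht]
        have hb0 : (0:ℚ) ≤ 2 * t := by linarith
        have hb1 : 2 * t ≤ 1 := by linarith
        simp only [hashAux_smul_left, hashAux_smul_right, hashAux_add_left, hashAux_add_right,
          hashAux_sub_left, hashAux_sub_right, hashAux_one_left, hashAux_one_right]
        rw [ih 1 _ hd.two_mul hb0 hb1, ih 0 _ hd.two_mul hb0 hb1,
          hashAux_tt _ _ hd.two_mul hb0 hb1]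
        push_cast
        ring
      · rw [if_neg ht]
        have hb0 : (0:ℚ) ≤ 2 * t - 1 := by linarith
        have hb1 : 2 * t - 1 ≤ 1 := by linarith
        simp only [hashAux_smul_left, hashAux_smul_right, hashAux_add_left, hashAux_add_right,
          hashAux_sub_left, hashAux_sub_right, hashAux_one_left, hashAux_one_right]
        rw [ih 1 _ hd.two_mul_sub hb0 hb1, ih 0 _ hd.two_mul_sub hb0 hb1,
          hashAux_tt _ _ hd.two_mul_sub hb0 hb1,
          ih 1 _ (dy_one n) (by norm_num) (by norm_num),
          ih 0 _ (dy_one n) (by norm_num) (by norm_num),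
          hashAux_tt _ _ (dy_one n) (by norm_num) (by norm_num)]
        push_cast
        ring
    · rcases Nat.even_or_odd m with hme | hmo
      · -- m even, m ≠ 0
        have hm : m % 2 = 0 := Nat.even_iff.mp hme
        rw [T0_phi_even hm, T1_phi_even hm (by omega)]
        by_cases ht : t ≤ 1/2
        · rw [if_pos ht]
          have hb0 : (0:ℚ) ≤ 2 * t := by linarith
          have hb1 : 2 * t ≤ 1 := by linarith
          simp only [hashAux_smul_left, hashAux_smul_right, hashAux_add_left, hashAux_add_right,
            hashAux_sub_left, hashAux_sub_right, hashAux_one_left, hashAux_one_right]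
          rw [ih (m+1) _ hd.two_mul hb0 hb1, ih (m-1) _ hd.two_mul hb0 hb1,
            hashAux_tt _ _ hd.two_mul hb0 hb1, hashAux_t_eps n hd.two_mul hb0 hb1]
          ring
        · rw [if_neg ht]
          have hb0 : (0:ℚ) ≤ 2 * t - 1 := by linarith
          have hb1 : 2 * t - 1 ≤ 1 := by linarith
          simp only [hashAux_smul_left, hashAux_smul_right, hashAux_add_left, hashAux_add_right,
            hashAux_sub_left, hashAux_sub_right, hashAux_one_left, hashAux_one_right]
          rw [ih (m+1) _ hd.two_mul_sub hb0 hb1, ih (m-1) _ hd.two_mul_sub hb0 hb1,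
            hashAux_tt _ _ hd.two_mul_sub hb0 hb1, hashAux_t_eps n hd.two_mul_sub hb0 hb1,
            ih (m+1) _ (dy_one n) (by norm_num) (by norm_num),
            ih (m-1) _ (dy_one n) (by norm_num) (by norm_num),
            hashAux_tt _ _ (dy_one n) (by norm_num) (by norm_num),
            hashAux_t_eps n (dy_one n) (by norm_num) (by norm_num)]
          ring
      · -- m odd
        have hm : m % 2 = 1 := Nat.odd_iff.mp hmo
        rw [T0_phi_odd hm, T1_phi_odd hm]
        by_cases ht : t ≤ 1/2
        · rw [if_pos ht]
          have hb0 : (0:ℚ) ≤ 2 * t := by linarith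
          have hb1 : 2 * t ≤ 1 := by linarith
          simp only [hashAux_smul_left, hashAux_smul_right, hashAux_add_left, hashAux_add_right,
            hashAux_sub_left, hashAux_sub_right, hashAux_one_left, hashAux_one_right]
          rw [ih (m+1) _ hd.two_mul hb0 hb1, ih (m-1) _ hd.two_mul hb0 hb1,
            hashAux_tt _ _ hd.two_mul hb0 hb1, hashAux_t_eps n hd.two_mul hb0 hb1]
          ring
        · rw [if_neg ht]
          have hb0 : (0:ℚ) ≤ 2 * t - 1 := by linarith
          have hb1 : 2 * t - 1 ≤ 1 := by linarith
          simp only [hashAux_smul_left, hashAux_smul_right, hashAux_add_left, hashAux_add_right,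
            hashAux_sub_left, hashAux_sub_right, hashAux_one_left, hashAux_one_right]
          rw [ih (m+1) _ hd.two_mul_sub hb0 hb1, ih (m-1) _ hd.two_mul_sub hb0 hb1,
            hashAux_tt _ _ hd.two_mul_sub hb0 hb1, hashAux_t_eps n hd.two_mul_sub hb0 hb1,
            ih (m+1) _ (dy_one n) (by norm_num) (by norm_num),
            ih (m-1) _ (dy_one n) (by norm_num) (by norm_num),
            hashAux_tt _ _ (dy_one n) (by norm_num) (by norm_num),
            hashAux_t_eps n (dy_one n) (by norm_num) (by norm_num)]
          ring

end L25


open L25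

/-- Lemma 2.5: with `T = 32T₀` and `E_k = ε # φ_{k−1}`:
(1) `T(E₁) = E₁ + E₂ + 6t`; (2) for `k > 1`,
`T(E_k) = E_{k−1} + E_{k+1} + (8k−2)t + (ε # ε)`;
(3) `T(ε # ε) = 4(ε # ε) + 4t` and `T(t) = 16t`. -/
theorem statement10 :
    (32 : ℚ) • T0 (hash epsX (phiM 0)) =
        hash epsX (phiM 0) + hash epsX (phiM 1) + (6 : ℚ) • tId ∧
    (∀ k : ℕ, 1 < k →
      (32 : ℚ) • T0 (hash epsX (phiM (k - 1))) =
        hash epsX (phiM (k - 2)) + hash epsX (phiM k) + (8 * (k : ℚ) - 2) • tId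
          + hash epsX epsX) ∧
    (32 : ℚ) • T0 (hash epsX epsX) = (4 : ℚ) • hash epsX epsX + (4 : ℚ) • tId ∧
    (32 : ℚ) • T0 tId = (16 : ℚ) • tId := by
  refine ⟨?_, ?_, ?_, ?_⟩
  · funext s
    obtain ⟨n, hn⟩ := dy_of_mem s.2
    have h0 := s.2.1
    have h1 := s.2.2.1
    show (32:ℚ) * evI (hash epsX (phiM 0)) (s.1/2) = _
    rw [evI_hash hn.half (by linarith) (by linarith)]
    rw [hashAux_step, if_pos (by linarith : s.1/2 ≤ 1/2), show 2*(s.1/2) = s.1 by ring]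
    rw [T0_eps, T1_eps, T0_phi_even (by norm_num), T1_phi_zero]
    simp only [hashAux_smul_left, hashAux_smul_right, hashAux_add_left, hashAux_add_right,
      hashAux_sub_left, hashAux_sub_right, hashAux_one_left, hashAux_one_right]
    rw [hashAux_eps_t n s.1 hn h0 h1, hashAux_t_phi n 1 s.1 hn h0 h1,
      hashAux_t_phi n 0 s.1 hn h0 h1, hashAux_tt n s.1 hn h0 h1]
    simp only [Pi.add_apply, Pi.smul_apply, smul_eq_mul, tId_apply]
    rw [hash_apply epsX (phiM 0) s hn, hash_apply epsX (phiM 1) s hn]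
    ring
  · intro k hk
    obtain ⟨j, rfl⟩ : ∃ j, k = j + 2 := ⟨k - 2, by omega⟩
    have e1 : j + 2 - 1 = j + 1 := by omega
    have e2 : j + 2 - 2 = j := by omega
    rw [e1, e2]
    funext s
    obtain ⟨n, hn⟩ := dy_of_mem s.2
    have h0 := s.2.1
    have h1 := s.2.2.1
    show (32:ℚ) * evI (hash epsX (phiM (j+1))) (s.1/2) = _
    rw [evI_hash hn.half (by linarith) (by linarith)]
    rw [hashAux_step, if_pos (by linarith : s.1/2 ≤ 1/2), show 2*(s.1/2) = s.1 by ring]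
    rcases Nat.even_or_odd j with hj | hj
    · -- j even, so m = j+1 odd
      have hj2 : j % 2 = 0 := Nat.even_iff.mp hj
      have hm : (j+1) % 2 = 1 := by omega
      rw [T0_eps, T1_eps, T0_phi_odd hm, T1_phi_odd hm]
      simp only [hashAux_smul_left, hashAux_smul_right, hashAux_add_left, hashAux_add_right,
        hashAux_sub_left, hashAux_sub_right, hashAux_one_left, hashAux_one_right]
      rw [show j + 1 - 1 = j from rfl]
      rw [hashAux_eps_t n s.1 hn h0 h1, hashAux_t_phi n j s.1 hn h0 h1,
        hashAux_t_phi n (j+1+1) s.1 hn h0 h1, hashAux_tt n s.1 hn h0 h1,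
        hashAux_comm n tId epsX, hashAux_eps_t n s.1 hn h0 h1]
      simp only [Pi.add_apply, Pi.smul_apply, smul_eq_mul, tId_apply]
      rw [hash_apply epsX (phiM j) s hn, hash_apply epsX (phiM (j+2)) s hn,
        hash_apply epsX epsX s hn]
      rw [show j + 1 + 1 = j + 2 from rfl]
      push_cast
      ring
    · -- j odd, so m = j+1 even and nonzero
      have hj2 : j % 2 = 1 := Nat.odd_iff.mp hj
      have hm : (j+1) % 2 = 0 := by omega
      rw [T0_eps, T1_eps, T0_phi_even hm, T1_phi_even hm (by omega)]
      simp only [hashAux_smul_left, hashAux_smul_right, hashAux_add_left, hashAux_add_right,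
        hashAux_sub_left, hashAux_sub_right, hashAux_one_left, hashAux_one_right]
      rw [show j + 1 - 1 = j from rfl]
      rw [hashAux_eps_t n s.1 hn h0 h1, hashAux_t_phi n j s.1 hn h0 h1,
        hashAux_t_phi n (j+1+1) s.1 hn h0 h1, hashAux_tt n s.1 hn h0 h1,
        hashAux_comm n tId epsX, hashAux_eps_t n s.1 hn h0 h1]
      simp only [Pi.add_apply, Pi.smul_apply, smul_eq_mul, tId_apply]
      rw [hash_apply epsX (phiM j) s hn, hash_apply epsX (phiM (j+2)) s hn,
        hash_apply epsX epsX s hn]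
      rw [show j + 1 + 1 = j + 2 from rfl]
      push_cast
      ring
  · funext s
    obtain ⟨n, hn⟩ := dy_of_mem s.2
    have h0 := s.2.1
    have h1 := s.2.2.1
    show (32:ℚ) * evI (hash epsX epsX) (s.1/2) = _
    rw [evI_hash hn.half (by linarith) (by linarith)]
    rw [hashAux_step, if_pos (by linarith : s.1/2 ≤ 1/2), show 2*(s.1/2) = s.1 by ring]
    rw [T0_eps, T1_eps]
    simp only [hashAux_smul_left, hashAux_smul_right, hashAux_add_left, hashAux_add_right,
      hashAux_sub_left, hashAux_sub_right, hashAux_one_left, hashAux_one_right]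
    rw [hashAux_eps_t n s.1 hn h0 h1, hashAux_tt n s.1 hn h0 h1,
      hashAux_comm n tId epsX, hashAux_eps_t n s.1 hn h0 h1]
    simp only [Pi.add_apply, Pi.smul_apply, smul_eq_mul, tId_apply]
    rw [hash_apply epsX epsX s hn]
    ring
  · funext s
    show (32:ℚ) * evI tId (s.1/2) = (16:ℚ) * s.1
    rw [evI_of_mem (half_mem s)]
    show (32:ℚ) * (s.1/2) = (16:ℚ) * s.1
    ring

end
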